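/- Let G be a finite connected simple graph with edge-weight function w : E(G) → ℝ such that w(e) ≥ 1 for every edge e, and fix two vertices S and D. Then there exists a natural number K such that for all k ≥ K, every path P from S to D that minimizes the transformed length ∑_{e ∈ P} w(e)^k among all S–D paths also minimizes the maximum edge weight among all S–D paths (i.e., P is a minimax path from S to D). -/

import Mathlib

open SimpleGraph

/-- In a finite connected graph with edge weights all `≥ 1`, for any two vertices
`S`, `D` there is a `K` such that for all `k ≥ K`, every `S`–`D` path minimizing
the transformed length `∑_{e ∈ P} w(e) ^ k` among all `S`–`D` paths is a minimax
path: it also minimizes the maximum edge weight among all `S`–`D` paths. -/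
theorem transformed_shortest_path_is_minimax {V : Type*} [Fintype V]
    (G : SimpleGraph V) (hG : G.Connected)
    (w : Sym2 V → ℝ) (hw : ∀ e ∈ G.edgeSet, 1 ≤ w e)
    (S D : V) :
    ∃ K : ℕ, ∀ k : ℕ, K ≤ k →
      ∀ P : G.Walk S D, P.IsPath →
        (∀ Q : G.Walk S D, Q.IsPath →
          (P.edges.map (fun e => w e ^ k)).sum ≤
            (Q.edges.map (fun e => w e ^ k)).sum) →
        (∀ Q : G.Walk S D, Q.IsPath →
          (P.edges.map w).maximum ≤ (Q.edges.map w).maximum) := by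
  classical
  -- a minimax path Q₀
  have hne : (Finset.univ : Finset (G.Path S D)).Nonempty := by
    obtain ⟨p⟩ := hG.preconnected S D
    exact ⟨p.toPath, Finset.mem_univ _⟩
  obtain ⟨Q₀, -, hQ₀⟩ := Finset.exists_min_image Finset.univ
    (fun Q : G.Path S D => ((Q : G.Walk S D).edges.map w).maximum) hne
  have hQ₀' : ∀ Q : G.Walk S D, Q.IsPath →
      ((Q₀ : G.Walk S D).edges.map w).maximum ≤ (Q.edges.map w).maximum :=
    fun Q hQ => hQ₀ ⟨Q, hQ⟩ (Finset.mem_univ _)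
  -- key sufficiency: it suffices that P's max ≤ Q₀'s max
  have key : ∀ (K : ℕ), (∀ k : ℕ, K ≤ k → ∀ P : G.Walk S D, P.IsPath →
      (∀ Q : G.Walk S D, Q.IsPath →
        (P.edges.map (fun e => w e ^ k)).sum ≤ (Q.edges.map (fun e => w e ^ k)).sum) →
      (P.edges.map w).maximum ≤ ((Q₀ : G.Walk S D).edges.map w).maximum) →
      ∃ K : ℕ, ∀ k : ℕ, K ≤ k →
      ∀ P : G.Walk S D, P.IsPath →
        (∀ Q : G.Walk S D, Q.IsPath →
          (P.edges.map (fun e => w e ^ k)).sum ≤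
            (Q.edges.map (fun e => w e ^ k)).sum) →
        (∀ Q : G.Walk S D, Q.IsPath →
          (P.edges.map w).maximum ≤ (Q.edges.map w).maximum) := by
    intro K hK
    exact ⟨K, fun k hk P hP hmin Q hQ =>
      le_trans (hK k hk P hP hmin) (hQ₀' Q hQ)⟩
  -- weights on P are ≥ 1
  have hwP : ∀ {P : G.Walk S D} {e}, e ∈ P.edges → 1 ≤ w e := by
    intro P e he
    exact hw e (P.edges_subset_edgeSet he)
  rcases hm : ((Q₀ : G.Walk S D).edges.map w).maximum with _ | μ
  · -- Q₀ has no edges; sums along Q₀ are 0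
    have hnil : (Q₀ : G.Walk S D).edges = [] := by
      have := List.maximum_eq_bot.mp hm
      exact List.map_eq_nil_iff.mp this
    apply key 0
    intro k _ P hP hmin
    rw [hm]
    by_contra hcon
    -- then P has an edge, so its sum is ≥ 1 > 0
    have hPne : P.edges ≠ [] := by
      intro h
      rw [h] at hcon
      simp at hcon
      exact hcon (le_refl _)
    obtain ⟨e, he⟩ := List.exists_mem_of_ne_nil _ hPne
    have h1 : (1:ℝ) ≤ (P.edges.map (fun e => w e ^ k)).sum := by
      have : (1:ℝ) ≤ w e ^ k := one_le_pow₀ (hwP he)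
      calc (1:ℝ) ≤ w e ^ k := this
        _ ≤ (P.edges.map (fun e => w e ^ k)).sum := by
          apply List.single_le_sum
          · intro x hx
            simp only [List.mem_map] at hx
            obtain ⟨a, ha, rfl⟩ := hx
            exact pow_nonneg (by linarith [hwP ha]) k
          · exact List.mem_map_of_mem he
    have h2 := hmin (Q₀ : G.Walk S D) Q₀.prop
    rw [hnil] at h2
    simp at h2
    linarith
  · -- Q₀'s max weight is μ ≥ 1
    have hμmem : μ ∈ (Q₀ : G.Walk S D).edges.map w := List.maximum_mem hm
    obtain ⟨e₀, he₀, rfl⟩ := List.mem_map.mp hμmem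
    set μ := w e₀ with hμdef
    have hμ1 : (1:ℝ) ≤ μ := hwP he₀
    -- edges heavier than μ
    set A : Finset (Sym2 V) := G.edgeFinset.filter (fun e => μ < w e) with hA
    by_cases hAne : (A.image w).Nonempty
    · set c : ℝ := (A.image w).min' hAne with hc
      have hcA : c ∈ A.image w := Finset.min'_mem _ hAne
      obtain ⟨e₁, he₁, hce₁⟩ := Finset.mem_image.mp hcA
      have hcμ : μ < c := hce₁ ▸ (Finset.mem_filter.mp he₁).2
      have hμpos : (0:ℝ) < μ := lt_of_lt_of_le zero_lt_one hμ1
      have hr : 1 < c / μ := (one_lt_div hμpos).mpr hcμ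
      obtain ⟨K, hK⟩ := Filter.eventually_atTop.mp
        ((tendsto_pow_atTop_atTop_of_one_lt hr).eventually_gt_atTop (Fintype.card V : ℝ))
      apply key K
      intro k hk P hP hmin
      rw [hm]
      apply List.maximum_le_of_forall_le
      intro a ha
      obtain ⟨e, he, rfl⟩ := List.mem_map.mp ha
      suffices hgoal : w e ≤ μ from WithBot.coe_le_coe.mpr hgoal
      by_contra hcon
      push_neg at hcon
      -- w e ∈ A.image w, so c ≤ w e
      have heA : w e ∈ A.image w := Finset.mem_image.mpr
        ⟨e, Finset.mem_filter.mpr ⟨mem_edgeFinset.mpr (P.edges_subset_edgeSet he), hcon⟩, rfl⟩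
      have hcwe : c ≤ w e := Finset.min'_le _ _ heA
      have hc1 : (1:ℝ) ≤ c := le_trans hμ1 hcμ.le
      -- lower bound on P's sum
      have hlow : c ^ k ≤ (P.edges.map (fun e => w e ^ k)).sum := by
        calc c ^ k ≤ w e ^ k := pow_le_pow_left₀ (by linarith) hcwe k
          _ ≤ _ := by
            apply List.single_le_sum
            · intro x hx
              obtain ⟨a, ha', rfl⟩ := List.mem_map.mp hx
              exact pow_nonneg (by linarith [hwP ha']) k
            · exact List.mem_map_of_mem he
      -- upper bound on Q₀'s sum
      have hup : ((Q₀ : G.Walk S D).edges.map (fun e => w e ^ k)).sum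
          ≤ (Fintype.card V : ℝ) * μ ^ k := by
        have hlen : ((Q₀ : G.Walk S D).edges.map (fun e => w e ^ k)).length
            ≤ Fintype.card V := by
          rw [List.length_map, Walk.length_edges]
          exact (Q₀.prop.length_lt).le
        calc ((Q₀ : G.Walk S D).edges.map (fun e => w e ^ k)).sum
            ≤ ((Q₀ : G.Walk S D).edges.map (fun e => w e ^ k)).length • μ ^ k := by
              apply List.sum_le_card_nsmul
              intro x hx
              obtain ⟨a, ha', rfl⟩ := List.mem_map.mp hx
              have : w a ≤ μ := by
                have := List.le_maximum_of_mem (List.mem_map_of_mem (f := w) ha') hm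
                exact_mod_cast this
              exact pow_le_pow_left₀ (by linarith [hwP ha']) this k
          _ = (((Q₀ : G.Walk S D).edges.map (fun e => w e ^ k)).length : ℝ) * μ ^ k := by
              rw [nsmul_eq_mul]
          _ ≤ (Fintype.card V : ℝ) * μ ^ k := by
              apply mul_le_mul_of_nonneg_right _ (pow_nonneg hμpos.le k)
              exact_mod_cast hlen
      have hgt : (Fintype.card V : ℝ) * μ ^ k < c ^ k := by
        have h1 := hK k hk
        have h2 : (Fintype.card V : ℝ) * μ ^ k < (c / μ) ^ k * μ ^ k :=
          mul_lt_mul_of_pos_right h1 (pow_pos hμpos k)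
        rwa [div_pow, div_mul_cancel₀ _ (pow_ne_zero k (ne_of_gt hμpos))] at h2
      have := hmin (Q₀ : G.Walk S D) Q₀.prop
      linarith
    · -- no edge heavier than μ: every path max ≤ μ
      apply key 0
      intro k _ P hP hmin
      rw [hm]
      apply List.maximum_le_of_forall_le
      intro a ha
      obtain ⟨e, he, rfl⟩ := List.mem_map.mp ha
      have heE : e ∈ G.edgeFinset := by
        rw [mem_edgeFinset]; exact P.edges_subset_edgeSet he
      suffices hgoal : w e ≤ μ from WithBot.coe_le_coe.mpr hgoal
      by_contra hcon
      push_neg at hcon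
      exact hAne ⟨w e, Finset.mem_image.mpr ⟨e, Finset.mem_filter.mpr ⟨heE, hcon⟩, rfl⟩⟩
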